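/- arXiv:2411.04376 — 3 statements merged into one kernel-verified Lean document; each statement's English description precedes it below -/
import Mathlib

section
/- Split conformal coverage: if Z_1,…,Z_{n+1} are exchangeable real-valued random variables and q is the ⌈(n+1)(1−α)⌉-th smallest value among Z_1,…,Z_n, then P(Z_{n+1} ≤ q) ≥ 1 − α, provided ⌈(n+1)(1−α)⌉ ≤ n. -/
open MeasureTheory
open scoped ENNReal

/-- The `k`-th smallest element (1-indexed) of a list of reals. -/
noncomputable def kthSmallest (l : List ℝ) (k : ℕ) : ℝ :=
  (l.mergeSort (fun a b => a ≤ b)).getD (k - 1) 0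

open Finset in
/-- Count of entries of `v` strictly below `t`. -/
noncomputable def cntBelow {m : ℕ} (v : Fin m → ℝ) (t : ℝ) : ℕ :=
  ∑ i, if v i < t then 1 else 0

open Finset in
lemma card_filter_coe_lt (m k : ℕ) (hk : k ≤ m) :
    (univ.filter fun j : Fin m => (j : ℕ) < k).card = k := by
  classical
  have himg : (univ.filter fun j : Fin m => (j : ℕ) < k).image Fin.val = Finset.range k := by
    ext a
    simp only [mem_image, mem_filter, mem_univ, true_and, Finset.mem_range]
    constructor
    · rintro ⟨j, hj, rfl⟩; exact hj
    · intro ha; exact ⟨⟨a, lt_of_lt_of_le ha hk⟩, ha, rfl⟩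
  have := Finset.card_image_of_injective
    (univ.filter fun j : Fin m => (j : ℕ) < k) (Fin.val_injective)
  rw [himg, Finset.card_range] at this
  omega

open Finset in
lemma sum_ite_coe_lt (m k : ℕ) (hk : k ≤ m) :
    (∑ i : Fin m, if (i : ℕ) < k then 1 else 0) = k := by
  classical
  rw [Finset.sum_boole]
  simpa using card_filter_coe_lt m k hk

open Finset in
lemma cntBelow_comp_perm {m : ℕ} (v : Fin m → ℝ) (σ : Equiv.Perm (Fin m)) (t : ℝ) :
    cntBelow (fun i => v (σ i)) t = cntBelow v t := by
  classical
  unfold cntBelow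
  exact Equiv.sum_comp σ (fun i => if v i < t then 1 else 0)

open Finset in
/-- At least `k` indices `j` have strict-below-count less than `k`. -/
lemma rank_lemma {m k : ℕ} (hk : k ≤ m) (v : Fin m → ℝ) :
    k ≤ (univ.filter fun j : Fin m => cntBelow v (v j) < k).card := by
  classical
  set σ := Tuple.sort v with hσ
  have hmono : Monotone (v ∘ σ) := Tuple.monotone_sort v
  have key : ∀ j : Fin m, (j : ℕ) < k → cntBelow v (v (σ j)) < k := by
    intro j hj
    have hle : cntBelow v (v (σ j)) ≤ (j : ℕ) := by
      rw [← cntBelow_comp_perm v σ (v (σ j))]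
      unfold cntBelow
      calc (∑ i : Fin m, if v (σ i) < v (σ j) then 1 else 0)
          ≤ ∑ i : Fin m, if (i : ℕ) < (j : ℕ) then 1 else 0 := by
            apply Finset.sum_le_sum
            intro i _
            by_cases h : v (σ i) < v (σ j)
            · have hij : (i : ℕ) < (j : ℕ) := by
                by_contra hc
                have : j ≤ i := by omega
                exact absurd (hmono this) (not_le.mpr h)
              simp [h, hij]
            · simp [h]
        _ = (j : ℕ) := sum_ite_coe_lt m j (le_of_lt j.isLt)
    omega
  have hmaps : ∀ j ∈ univ.filter fun j : Fin m => (j : ℕ) < k,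
      σ j ∈ univ.filter fun j : Fin m => cntBelow v (v j) < k := by
    intro j hj
    rw [mem_filter] at hj ⊢
    exact ⟨mem_univ _, key j hj.2⟩
  have hinj := σ.injective.injOn (s := ↑(univ.filter fun j : Fin m => (j : ℕ) < k))
  have := Finset.card_le_card_of_injOn σ hmaps hinj
  rwa [card_filter_coe_lt m k hk] at this

open Finset in
lemma countP_ofFn {m : ℕ} (f : Fin m → ℝ) (t : ℝ) :
    (List.ofFn f).countP (fun a => decide (a < t)) = cntBelow f t := by
  classical
  induction m with
  | zero => simp [cntBelow]
  | succ m ih =>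
      rw [List.ofFn_succ, List.countP_cons]
      unfold cntBelow
      rw [Fin.sum_univ_succ]
      have := ih (fun i => f i.succ)
      unfold cntBelow at this
      by_cases h : f 0 < t
      · simp [h, this]; ring
      · simp [h, this]

/-- If fewer than `k` elements of `l` are below `t`, then `t ≤` the `k`-th smallest. -/
lemma le_kthSmallest {l : List ℝ} {k : ℕ} {t : ℝ} (hk1 : 1 ≤ k) (hk2 : k ≤ l.length)
    (h : l.countP (fun a => decide (a < t)) < k) : t ≤ kthSmallest l k := by
  classical
  set s := l.mergeSort (fun a b => a ≤ b) with hs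
  have hperm : s.Perm l := l.mergeSort_perm _
  have hsorted : s.Pairwise (· ≤ ·) := List.pairwise_mergeSort' _ l
  have hlen : s.length = l.length := hperm.length_eq
  have hcount : s.countP (fun a => decide (a < t)) < k := by
    rwa [hperm.countP_eq]
  have hk2' : k ≤ s.length := by omega
  have hklt : k - 1 < s.length := by omega
  rw [kthSmallest, ← hs, List.getD_eq_getElem s 0 hklt]
  by_contra hcon
  push_neg at hcon
  -- all elements of `s.take k` are `< t`
  have hall : ∀ a ∈ s.take k, (fun a => decide (a < t)) a = true := by
    intro a ha
    rw [List.mem_iff_getElem] at ha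
    obtain ⟨i, hi, rfl⟩ := ha
    have hik : i < k := by
      have : (s.take k).length = min k s.length := List.length_take
      omega
    have hilen : i < s.length := lt_of_lt_of_le hik hk2'
    rw [List.getElem_take]
    have hle : s[i] ≤ s[k-1] := by
      rcases eq_or_lt_of_le (Nat.le_of_lt_succ (by omega : i < (k-1)+1)) with heq | hlt
      · subst heq; exact le_refl _
      · exact hsorted.rel_get_of_lt (a := ⟨i, hilen⟩) (b := ⟨k-1, hklt⟩) hlt
    simpa using lt_of_le_of_lt hle hcon
  have htake : (s.take k).countP (fun a => decide (a < t)) = (s.take k).length :=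
    List.countP_eq_length.mpr hall
  have hlentake : (s.take k).length = k := by
    rw [List.length_take]; omega
  have : k ≤ s.countP (fun a => decide (a < t)) := by
    conv_rhs => rw [← List.take_append_drop k s]
    rw [List.countP_append, htake, hlentake]
    omega
  omega

/-- Split conformal coverage: for exchangeable `Z_1, …, Z_{n+1}` and `q` the
`⌈(n+1)(1−α)⌉`-th smallest among `Z_1, …, Z_n`, we have `P(Z_{n+1} ≤ q) ≥ 1 − α`. -/
theorem split_conformal_coverage
    {Ω : Type*} [MeasurableSpace Ω] (μ : Measure Ω) [IsProbabilityMeasure μ]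
    (n : ℕ) (hn : 0 < n) (α : ℝ) (hα : α ∈ Set.Ioo (0:ℝ) 1)
    (Z : Fin (n + 1) → Ω → ℝ) (hZ : ∀ i, Measurable (Z i))
    (hexch : ∀ σ : Equiv.Perm (Fin (n + 1)),
      Measure.map (fun ω => fun i => Z (σ i) ω) μ =
        Measure.map (fun ω => fun i => Z i ω) μ)
    (hk : ⌈(n + 1 : ℝ) * (1 - α)⌉₊ ≤ n) :
    ENNReal.ofReal (1 - α) ≤
      μ {ω | Z (Fin.last n) ω ≤
        kthSmallest (List.ofFn fun i : Fin n => Z i.castSucc ω)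
          ⌈(n + 1 : ℝ) * (1 - α)⌉₊} := by
  classical
  obtain ⟨hα0, hα1⟩ := hα
  set k := ⌈(n + 1 : ℝ) * (1 - α)⌉₊ with hkdef
  have hk1 : 1 ≤ k := by
    rw [hkdef, Nat.one_le_ceil_iff]
    have h1 : (0:ℝ) < 1 - α := by linarith
    positivity
  -- the events
  set A : Fin (n + 1) → Set Ω :=
    fun j => {ω | cntBelow (fun i => Z i ω) (Z j ω) < k} with hA
  have hAmeas : ∀ j, MeasurableSet (A j) := by
    intro j
    have hf : Measurable (fun ω => cntBelow (fun i => Z i ω) (Z j ω)) := by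
      unfold cntBelow
      apply Finset.measurable_sum
      intro i _
      exact Measurable.ite (measurableSet_lt (hZ i) (hZ j)) measurable_const measurable_const
    exact hf (MeasurableSet.of_discrete : MeasurableSet (Set.Iio k))
  -- all events have the same probability, by exchangeability
  have hAeq : ∀ j, μ (A j) = μ (A (Fin.last n)) := by
    intro j
    set σ : Equiv.Perm (Fin (n + 1)) := Equiv.swap j (Fin.last n) with hσ
    set S : Set (Fin (n + 1) → ℝ) := {v | cntBelow v (v (Fin.last n)) < k} with hSdef
    have hS : MeasurableSet S := by
      have hf : Measurable (fun v : Fin (n + 1) → ℝ => cntBelow v (v (Fin.last n))) := by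
        unfold cntBelow
        apply Finset.measurable_sum
        intro i _
        exact Measurable.ite
          (measurableSet_lt (measurable_pi_apply i) (measurable_pi_apply (Fin.last n)))
          measurable_const measurable_const
      exact hf (MeasurableSet.of_discrete : MeasurableSet (Set.Iio k))
    have hW : Measurable (fun ω => fun i => Z (σ i) ω) :=
      measurable_pi_lambda _ (fun i => hZ (σ i))
    have hV : Measurable (fun ω => fun i => Z i ω) :=
      measurable_pi_lambda _ (fun i => hZ i)
    have hmeq : μ ((fun ω => fun i => Z (σ i) ω) ⁻¹' S) =
        μ ((fun ω => fun i => Z i ω) ⁻¹' S) := by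
      rw [← Measure.map_apply hW hS, ← Measure.map_apply hV hS, hexch σ]
    have hpre1 : (fun ω => fun i => Z (σ i) ω) ⁻¹' S = A j := by
      ext ω
      simp only [Set.mem_preimage, hSdef, Set.mem_setOf_eq, hA]
      rw [cntBelow_comp_perm (fun i => Z i ω) σ]
      rw [show σ (Fin.last n) = j from Equiv.swap_apply_right _ _]
    have hpre2 : (fun ω => fun i => Z i ω) ⁻¹' S = A (Fin.last n) := by
      ext ω; rfl
    rw [← hpre1, ← hpre2, hmeq]
  -- the counting bound: ∑ indicators ≥ k pointwise
  have hpoint : ∀ ω, (k : ℝ≥0∞) ≤ ∑ j : Fin (n + 1),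
      (A j).indicator (fun _ => (1 : ℝ≥0∞)) ω := by
    intro ω
    have hsum : (∑ j : Fin (n + 1), (A j).indicator (fun _ => (1 : ℝ≥0∞)) ω)
        = ((Finset.univ.filter fun j : Fin (n + 1) =>
            cntBelow (fun i => Z i ω) (Z j ω) < k).card : ℝ≥0∞) := by
      rw [← Finset.sum_boole]
      apply Finset.sum_congr rfl
      intro j _
      simp [Set.indicator_apply, hA]
    rw [hsum]
    have := rank_lemma (v := fun i => Z i ω) (by omega : k ≤ n + 1)
    exact_mod_cast this
  -- integrate
  have hint : (k : ℝ≥0∞) ≤ (n + 1 : ℕ) * μ (A (Fin.last n)) := by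
    have h1 : (k : ℝ≥0∞) = ∫⁻ _, (k : ℝ≥0∞) ∂μ := by
      simp [lintegral_const]
    have h2 : (∫⁻ ω, (k : ℝ≥0∞) ∂μ) ≤
        ∫⁻ ω, ∑ j : Fin (n + 1), (A j).indicator (fun _ => (1 : ℝ≥0∞)) ω ∂μ :=
      lintegral_mono (fun ω => hpoint ω)
    have h3 : (∫⁻ ω, ∑ j : Fin (n + 1), (A j).indicator (fun _ => (1 : ℝ≥0∞)) ω ∂μ)
        = ∑ j : Fin (n + 1), μ (A j) := by
      rw [lintegral_finset_sum]
      · congr 1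
        ext j
        exact lintegral_indicator_one (hAmeas j)
      · intro j _
        exact (measurable_const.indicator (hAmeas j))
    have h4 : (∑ j : Fin (n + 1), μ (A j)) = (n + 1 : ℕ) * μ (A (Fin.last n)) := by
      calc (∑ j : Fin (n + 1), μ (A j)) = ∑ _j : Fin (n + 1), μ (A (Fin.last n)) := by
            exact Finset.sum_congr rfl (fun j _ => hAeq j)
        _ = (n + 1 : ℕ) * μ (A (Fin.last n)) := by
            rw [Finset.sum_const, Finset.card_univ, Fintype.card_fin, nsmul_eq_mul]
    rw [h1]
    calc (∫⁻ _, (k : ℝ≥0∞) ∂μ) ≤ _ := h2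
      _ = _ := h3
      _ = _ := h4
  -- conclude the probability bound
  have hprob : ENNReal.ofReal (1 - α) ≤ μ (A (Fin.last n)) := by
    have hne0 : ((n + 1 : ℕ) : ℝ≥0∞) ≠ 0 := by
      simp
    have hnetop : ((n + 1 : ℕ) : ℝ≥0∞) ≠ ⊤ := by
      simp
    rw [← ENNReal.mul_le_mul_iff_right hne0 hnetop]
    refine le_trans ?_ hint
    have hcast : ((n + 1 : ℕ) : ℝ≥0∞) * ENNReal.ofReal (1 - α)
        = ENNReal.ofReal ((n + 1 : ℝ) * (1 - α)) := by
      rw [ENNReal.ofReal_mul (by positivity)]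
      congr 1
      rw [← ENNReal.ofReal_natCast]
      push_cast
      ring_nf
    rw [hcast]
    have hle : ((n + 1 : ℝ) * (1 - α)) ≤ (k : ℝ) := Nat.le_ceil _
    calc ENNReal.ofReal ((n + 1 : ℝ) * (1 - α)) ≤ ENNReal.ofReal (k : ℝ) :=
          ENNReal.ofReal_le_ofReal hle
      _ = (k : ℝ≥0∞) := ENNReal.ofReal_natCast k
  -- the event is contained in the coverage event
  have hsub : A (Fin.last n) ⊆
      {ω | Z (Fin.last n) ω ≤
        kthSmallest (List.ofFn fun i : Fin n => Z i.castSucc ω) k} := by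
    intro ω hω
    simp only [hA, Set.mem_setOf_eq] at hω
    set t := Z (Fin.last n) ω with ht
    set f : Fin n → ℝ := fun i => Z i.castSucc ω with hf
    have hcnt : cntBelow f t ≤ cntBelow (fun i => Z i ω) t := by
      unfold cntBelow
      rw [Fin.sum_univ_castSucc]
      simp [hf, ht]
    have hcountP : (List.ofFn f).countP (fun a => decide (a < t)) < k := by
      rw [countP_ofFn]
      omega
    exact le_kthSmallest hk1 (by simp [List.length_ofFn]; omega) hcountP
  exact le_trans hprob (measure_mono hsub)
end

section
/- Empirical quantile validity: Given real numbers s_1,…,s_n and α ∈ (0,1), let q be the k-th smallest value with k = ⌈(n+1)(1−α)⌉ ≤ n. Then the fraction of indices i with s_i > q is at most α. -/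
lemma card_filter_eq_countP (n : ℕ) (s : Fin n → ℝ) (q : ℝ) :
    (Finset.univ.filter fun i : Fin n => q < s i).card
      = (List.ofFn s).countP (fun x => decide (q < x)) := by
  simp only [Finset.filter, Finset.card, Fin.univ_def, Fintype.elems, List.ofFn_eq_map,
    List.countP_eq_length_filter, List.filter_map, Multiset.filter_coe, Multiset.coe_card,
    Function.comp_def, List.length_map]

/-- Count of elements strictly greater than the `k`-th element of a sorted list is
at most `length - k`. -/
lemma countP_gt_le (l : List ℝ) (k : ℕ) (hk1 : 1 ≤ k) (hkn : k ≤ l.length)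
    (hs : l.Pairwise (· ≤ ·)) :
    l.countP (fun x => decide (l.getD (k - 1) 0 < x)) ≤ l.length - k := by
  set q := l.getD (k - 1) 0 with hq
  have hkl : k - 1 < l.length := lt_of_lt_of_le (Nat.sub_lt hk1 one_pos) hkn
  have hqe : q = l.get ⟨k - 1, hkl⟩ := by
    rw [hq, List.getD_eq_getElem l 0 hkl]; rfl
  have hsplit : l = l.take k ++ l.drop k := (List.take_append_drop k l).symm
  have h1 : l.countP (fun x => decide (q < x)) =
      (l.take k).countP (fun x => decide (q < x)) +
      (l.drop k).countP (fun x => decide (q < x)) := by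
    conv_lhs => rw [hsplit]
    rw [List.countP_append]
  have h2 : (l.take k).countP (fun x => decide (q < x)) = 0 := by
    rw [List.countP_eq_zero]
    intro a ha
    obtain ⟨i, hi, rfl⟩ := List.mem_iff_getElem.1 ha
    have hilen : i < l.length := lt_of_lt_of_le (lt_of_lt_of_le hi (by
      simp [List.length_take])) le_rfl
    rw [List.getElem_take]
    have hik : i ≤ k - 1 := by
      have : i < k := lt_of_lt_of_le hi (by simp [List.length_take])
      omega
    have hle : l.get ⟨i, hilen⟩ ≤ l.get ⟨k - 1, hkl⟩ :=
      hs.rel_get_of_le (by exact hik)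
    simp only [decide_eq_true_eq] at *
    rw [hqe]
    exact not_lt.2 (by simpa using hle)
  have h3 : (l.drop k).countP (fun x => decide (q < x)) ≤ l.length - k := by
    calc (l.drop k).countP (fun x => decide (q < x)) ≤ (l.drop k).length :=
          List.countP_le_length
      _ = l.length - k := List.length_drop
  omega

/-- Empirical quantile validity: with `q` the `⌈(n+1)(1−α)⌉`-th smallest of
`s_1, …, s_n`, the fraction of indices with `s_i > q` is at most `α`. -/
theorem empirical_quantile_validity
    (n : ℕ) (hn : 0 < n) (α : ℝ) (hα : α ∈ Set.Ioo (0:ℝ) 1)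
    (s : Fin n → ℝ)
    (hk : ⌈(n + 1 : ℝ) * (1 - α)⌉₊ ≤ n) :
    ((Finset.univ.filter fun i : Fin n =>
        kthSmallest (List.ofFn s) ⌈(n + 1 : ℝ) * (1 - α)⌉₊ < s i).card : ℝ) / n ≤ α := by
  obtain ⟨hα0, hα1⟩ := hα
  set k := ⌈(n + 1 : ℝ) * (1 - α)⌉₊ with hkdef
  have hk1 : 1 ≤ k := by
    rw [hkdef, Nat.one_le_ceil_iff]
    have h1 : (0:ℝ) < 1 - α := by linarith
    have h2 : (0:ℝ) < (n:ℝ) + 1 := by positivity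
    nlinarith
  -- the sorted list
  set l : List ℝ := List.ofFn s with hl
  set sl : List ℝ := l.mergeSort (fun a b => a ≤ b) with hsl
  have hperm : List.Perm sl l := List.mergeSort_perm l _
  have hlen : sl.length = n := by rw [hperm.length_eq, hl, List.length_ofFn]
  have hsorted : sl.Pairwise (· ≤ ·) := by
    have := List.pairwise_mergeSort (le := fun a b : ℝ => a ≤ b)
      (fun a b c => by simpa using le_trans) (fun a b => by simpa using le_total a b) l
    exact List.Pairwise.imp (by simp) this
  -- quantile value
  have hq : kthSmallest l k = sl.getD (k - 1) 0 := rfl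
  -- counting bound
  have hcount : (Finset.univ.filter fun i : Fin n => kthSmallest l k < s i).card ≤ n - k := by
    rw [card_filter_eq_countP n s (kthSmallest l k)]
    have := countP_gt_le sl k hk1 (hlen ▸ hk) hsorted
    rw [hlen] at this
    rw [← hq] at this
    calc l.countP (fun x => decide (kthSmallest l k < x))
        = sl.countP (fun x => decide (kthSmallest l k < x)) := (hperm.countP_eq _).symm
      _ ≤ n - k := this
  -- arithmetic: (n - k)/n ≤ α
  have hkreal : (n + 1 : ℝ) * (1 - α) ≤ (k : ℝ) := Nat.le_ceil _
  have hnk : ((n - k : ℕ) : ℝ) ≤ α * n := by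
    have : ((n - k : ℕ) : ℝ) = (n : ℝ) - (k : ℝ) := by
      rw [Nat.cast_sub hk]
    rw [this]
    nlinarith
  have hcardle : ((Finset.univ.filter fun i : Fin n => kthSmallest l k < s i).card : ℝ)
      ≤ α * n := le_trans (by exact_mod_cast hcount) hnk
  rw [div_le_iff₀ (by exact_mod_cast hn)]
  linarith
end

section
/- For exchangeable scores Z_1,…,Z_{n+1}, and q defined as the ⌈(n+1)(1−α)⌉-th order statistic of Z_1,…,Z_n with distinct values almost surely, the coverage also satisfies the upper bound P(Z_{n+1} ≤ q) ≤ 1 − α + 1/(n+1). -/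
open MeasureTheory ENNReal

lemma countP_lt_of_le_kthSmallest (l : List ℝ) (k : ℕ) (hk1 : 1 ≤ k) (hkl : k ≤ l.length)
    (t : ℝ) (ht : t ≤ kthSmallest l k) :
    l.countP (fun x => decide (x < t)) ≤ k - 1 := by
  set s := l.mergeSort (fun a b => a ≤ b) with hs
  have hsl : s.length = l.length := List.length_mergeSort l
  have hsort : List.Pairwise (· ≤ ·) s := List.pairwise_mergeSort' (· ≤ ·) l
  have hperm : s.Perm l := List.mergeSort_perm l _
  have hkk : k - 1 < s.length := by omega
  have hget : s.getD (k-1) 0 = s[k-1] := List.getD_eq_getElem s 0 hkk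
  have hq : t ≤ s[k-1] := by
    rw [kthSmallest, ← hs, hget] at ht; exact ht
  have hpair := List.pairwise_iff_getElem.mp hsort
  have hdrop : ∀ x ∈ s.drop (k-1), ¬ (x < t) := by
    intro x hx
    obtain ⟨j, hj, rfl⟩ := List.getElem_of_mem hx
    have hlen : k - 1 + j < s.length := by
      rw [List.length_drop] at hj; omega
    rw [List.getElem_drop]
    have h2 : t ≤ s[k-1+j] := by
      rcases Nat.eq_zero_or_pos j with h | h
      · subst h; simpa using hq
      · exact le_trans hq (hpair (k-1) (k-1+j) hkk hlen (by omega))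
    exact not_lt.2 h2
  have hsplit : s.countP (fun x => decide (x < t)) ≤ k - 1 := by
    conv_lhs => rw [← List.take_append_drop (k-1) s]
    rw [List.countP_append]
    have h0 : (s.drop (k-1)).countP (fun x => decide (x < t)) = 0 := by
      rw [List.countP_eq_zero]
      intro x hx; simpa using hdrop x hx
    rw [h0, Nat.add_zero]
    calc (s.take (k-1)).countP (fun x => decide (x < t)) ≤ (s.take (k-1)).length :=
          List.countP_le_length
      _ ≤ k - 1 := by simp [List.length_take]
  rw [← hperm.countP_eq]
  exact hsplit

lemma countP_ofFn_s18 {n : ℕ} (f : Fin n → ℝ) (p : ℝ → Bool) :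
    (List.ofFn f).countP p = (Finset.univ.filter (fun i => p (f i))).card := by
  induction n with
  | zero => simp
  | succ m ih =>
    rw [List.ofFn_succ, List.countP_cons, ih (fun i => f i.succ)]
    rw [Finset.card_filter, Finset.card_filter, Fin.sum_univ_succ]
    simp [add_comm]

noncomputable def rnk {n : ℕ} (v : Fin n → ℝ) (i : Fin n) : ℕ :=
  (Finset.univ.filter (fun l => v l ≤ v i)).card

lemma rnk_comp {n : ℕ} (v : Fin n → ℝ) (σ : Equiv.Perm (Fin n)) (i : Fin n) :
    rnk (v ∘ σ) i = rnk v (σ i) := by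
  unfold rnk
  apply Finset.card_bij (fun l _ => σ l)
  · intro a ha; simp at ha ⊢; exact ha
  · intro a _ b _ h; exact σ.injective h
  · intro b hb; refine ⟨σ.symm b, ?_, by simp⟩
    simp at hb ⊢; simpa using hb

lemma rnk_pos {n : ℕ} (v : Fin n → ℝ) (i : Fin n) : 1 ≤ rnk v i := by
  rw [Nat.one_le_iff_ne_zero, ← Nat.pos_iff_ne_zero]
  apply Finset.card_pos.2
  exact ⟨i, by simp⟩

lemma rnk_injOn {n : ℕ} (v : Fin n → ℝ) (hv : Function.Injective v)
    {i j : Fin n} (h : rnk v i = rnk v j) : i = j := by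
  by_contra hij
  have hne : v i ≠ v j := fun he => hij (hv he)
  wlog hlt : v i < v j generalizing i j
  · exact this h.symm (Ne.symm hij) hne.symm (lt_of_le_of_ne (not_lt.mp hlt) hne.symm)
  have hsub : (Finset.univ.filter (fun l => v l ≤ v i)) ⊂
      (Finset.univ.filter (fun l => v l ≤ v j)) := by
    refine Finset.ssubset_iff_of_subset ?_ |>.2 ⟨j, by simp, by simp [not_le.2 hlt]⟩
    intro l hl; simp at hl ⊢; exact le_trans hl (le_of_lt hlt)
  exact absurd h (Nat.ne_of_lt (Finset.card_lt_card hsub))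

lemma measurable_rnk {n : ℕ} (i : Fin n) : Measurable (fun v : Fin n → ℝ => rnk v i) := by
  unfold rnk
  simp_rw [Finset.card_filter]
  apply Finset.measurable_sum
  intro l _
  exact Measurable.ite (measurableSet_le (measurable_pi_apply l) (measurable_pi_apply i))
    measurable_const measurable_const

/-- Upper bound for split conformal coverage: for exchangeable, almost surely
pairwise distinct `Z_1, …, Z_{n+1}` and `q` the `⌈(n+1)(1−α)⌉`-th smallest among
`Z_1, …, Z_n`, we have `P(Z_{n+1} ≤ q) ≤ 1 − α + 1/(n+1)`. -/
theorem split_conformal_coverage_upper_bound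
    {Ω : Type*} [MeasurableSpace Ω] (μ : Measure Ω) [IsProbabilityMeasure μ]
    (n : ℕ) (hn : 0 < n) (α : ℝ) (hα : α ∈ Set.Ioo (0:ℝ) 1)
    (Z : Fin (n + 1) → Ω → ℝ) (hZ : ∀ i, Measurable (Z i))
    (hexch : ∀ σ : Equiv.Perm (Fin (n + 1)),
      Measure.map (fun ω => fun i => Z (σ i) ω) μ =
        Measure.map (fun ω => fun i => Z i ω) μ)
    (hdistinct : μ {ω | ∃ i j : Fin (n + 1), i ≠ j ∧ Z i ω = Z j ω} = 0)
    (hk : ⌈(n + 1 : ℝ) * (1 - α)⌉₊ ≤ n) :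
    μ {ω | Z (Fin.last n) ω ≤
        kthSmallest (List.ofFn fun i : Fin n => Z i.castSucc ω)
          ⌈(n + 1 : ℝ) * (1 - α)⌉₊} ≤
      ENNReal.ofReal (1 - α + 1 / (n + 1)) := by
  set k := ⌈(n + 1 : ℝ) * (1 - α)⌉₊ with hkdef
  have hα1 : (0:ℝ) < α := hα.1
  have hα2 : α < 1 := hα.2
  have hpos : (0:ℝ) < (n + 1 : ℝ) * (1 - α) := mul_pos (by positivity) (by linarith)
  have hk1 : 1 ≤ k := Nat.one_le_iff_ne_zero.2 (by
    simpa [hkdef, Nat.pos_iff_ne_zero] using (Nat.ceil_pos.2 hpos))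
  set V : Ω → (Fin (n+1) → ℝ) := fun ω i => Z i ω with hV
  have hVmeas : Measurable V := measurable_pi_lambda _ (fun i => hZ i)
  set N : Set Ω := {ω | ∃ i j : Fin (n + 1), i ≠ j ∧ Z i ω = Z j ω} with hN
  have hNmeas : MeasurableSet N := by
    have : N = ⋃ i, ⋃ j, {ω | i ≠ j ∧ Z i ω = Z j ω} := by
      ext ω; simp [hN, Set.mem_iUnion]
    rw [this]
    refine MeasurableSet.iUnion fun i => MeasurableSet.iUnion fun j => ?_
    by_cases h : i = j
    · simp [h]
    · have : {ω | i ≠ j ∧ Z i ω = Z j ω} = {ω | Z i ω = Z j ω} := by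
        ext ω; simp [h]
      rw [this]
      exact measurableSet_eq_fun (hZ i) (hZ j)
  have hinj : ∀ ω, ω ∉ N → Function.Injective (V ω) := by
    intro ω hω i j hij
    by_contra hne
    exact hω ⟨i, j, hne, hij⟩
  -- the rank events
  have hrankmeas : ∀ (i : Fin (n+1)) (j : ℕ),
      MeasurableSet {ω | rnk (V ω) i = j} := by
    intro i j
    exact ((measurable_rnk i).comp hVmeas) (measurableSet_singleton j)
  -- exchangeability: all coordinates have the same rank distribution
  have hsame : ∀ i : Fin (n+1), ∀ j : ℕ,
      μ {ω | rnk (V ω) i = j} = μ {ω | rnk (V ω) (Fin.last n) = j} := by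
    intro i j
    set σ := Equiv.swap i (Fin.last n) with hσ
    have h1 := hexch σ
    set S : Set (Fin (n+1) → ℝ) := {v | rnk v (Fin.last n) = j} with hS
    have hSmeas : MeasurableSet S := (measurable_rnk _) (measurableSet_singleton j)
    have hW : Measurable (fun ω => fun l => Z (σ l) ω) :=
      measurable_pi_lambda _ (fun l => hZ (σ l))
    have h2 : μ ((fun ω => fun l => Z (σ l) ω) ⁻¹' S) = μ (V ⁻¹' S) := by
      rw [← Measure.map_apply hW hSmeas, ← Measure.map_apply hVmeas hSmeas]
      exact congrArg (fun m => m S) h1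
    have h3 : (fun ω => fun l => Z (σ l) ω) ⁻¹' S = {ω | rnk (V ω) i = j} := by
      ext ω
      have : (fun l => Z (σ l) ω) = V ω ∘ σ := rfl
      show rnk (V ω ∘ σ) (Fin.last n) = j ↔ rnk (V ω) i = j
      rw [rnk_comp, hσ, Equiv.swap_apply_right]
    have h4 : V ⁻¹' S = {ω | rnk (V ω) (Fin.last n) = j} := rfl
    rw [← h3, ← h4, h2]
  -- each rank value has probability ≤ 1/(n+1)
  have hbound : ∀ j : ℕ,
      μ {ω | rnk (V ω) (Fin.last n) = j} ≤ ((n : ℝ≥0∞) + 1)⁻¹ := by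
    intro j
    set A : Fin (n+1) → Set Ω := fun i => {ω | rnk (V ω) i = j} \ N with hA
    have hAmeas : ∀ i, MeasurableSet (A i) := fun i => (hrankmeas i j).diff hNmeas
    have hAdisj : Pairwise (Function.onFun Disjoint A) := by
      intro i i' hii'
      rw [Function.onFun, Set.disjoint_left]
      rintro ω ⟨h1, h2⟩ ⟨h3, _⟩
      exact hii' (rnk_injOn (V ω) (hinj ω h2) (h1.trans h3.symm))
    have hAμ : ∀ i, μ (A i) = μ {ω | rnk (V ω) (Fin.last n) = j} := by
      intro i
      rw [hA]
      simp only
      rw [measure_diff_null hdistinct, hsame i j]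
    have hsum : ∑ i : Fin (n+1), μ (A i) ≤ 1 := by
      rw [← tsum_fintype (L := SummationFilter.unconditional _), ← measure_iUnion hAdisj hAmeas]
      exact le_trans (measure_mono (Set.subset_univ _)) (le_of_eq measure_univ)
    have hsum2 : ((n:ℝ≥0∞)+1) * μ {ω | rnk (V ω) (Fin.last n) = j} ≤ 1 := by
      calc ((n:ℝ≥0∞)+1) * μ {ω | rnk (V ω) (Fin.last n) = j}
          = ∑ _i : Fin (n+1), μ {ω | rnk (V ω) (Fin.last n) = j} := by
            rw [Finset.sum_const, Finset.card_univ, Fintype.card_fin, nsmul_eq_mul]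
            push_cast; ring
        _ = ∑ i : Fin (n+1), μ (A i) := by
            exact Finset.sum_congr rfl fun i _ => (hAμ i).symm
        _ ≤ 1 := hsum
    rw [ENNReal.le_inv_iff_mul_le, mul_comm]
    exact hsum2
  -- the event is contained (mod N) in {rank ≤ k}
  have hEsub : {ω | Z (Fin.last n) ω ≤
        kthSmallest (List.ofFn fun i : Fin n => Z i.castSucc ω) k} \ N ⊆
      {ω | rnk (V ω) (Fin.last n) ≤ k} := by
    rintro ω ⟨hE, hωN⟩
    simp only [Set.mem_setOf_eq] at hE ⊢
    set t := Z (Fin.last n) ω with ht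
    set f : Fin n → ℝ := fun i => Z i.castSucc ω with hf
    have hlen : (List.ofFn f).length = n := List.length_ofFn
    have hcount := countP_lt_of_le_kthSmallest (List.ofFn f) k hk1 (by rw [hlen]; exact hk) t hE
    rw [countP_ofFn_s18] at hcount
    have hinjω := hinj ω hωN
    have hrnk : rnk (V ω) (Fin.last n) =
        (Finset.univ.filter (fun i : Fin n => decide (f i < t) = true)).card + 1 := by
      unfold rnk
      rw [Finset.card_filter, Finset.card_filter, Fin.sum_univ_castSucc]
      have hlast : V ω (Fin.last n) = t := rfl
      rw [hlast]
      simp only [if_pos (le_refl t)]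
      congr 1
      apply Finset.sum_congr rfl
      intro i _
      have hne : V ω i.castSucc ≠ t := by
        intro h
        have := hinjω (a₁ := i.castSucc) (a₂ := Fin.last n) h
        exact absurd this (Fin.ne_of_lt i.castSucc_lt_last)
      have : (V ω i.castSucc ≤ t) ↔ (f i < t) := by
        constructor
        · intro h; exact lt_of_le_of_ne h hne
        · intro h; exact le_of_lt h
      simp only [this]
      simp
    rw [hrnk]
    omega
  -- putting it together
  have hmeasE : μ {ω | Z (Fin.last n) ω ≤
      kthSmallest (List.ofFn fun i : Fin n => Z i.castSucc ω) k} ≤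
      ∑ j ∈ Finset.Icc 1 k, ((n : ℝ≥0∞) + 1)⁻¹ := by
    calc μ {ω | Z (Fin.last n) ω ≤
        kthSmallest (List.ofFn fun i : Fin n => Z i.castSucc ω) k}
        = μ ({ω | Z (Fin.last n) ω ≤
            kthSmallest (List.ofFn fun i : Fin n => Z i.castSucc ω) k} \ N) :=
          (measure_diff_null hdistinct).symm
      _ ≤ μ {ω | rnk (V ω) (Fin.last n) ≤ k} := measure_mono hEsub
      _ ≤ μ (⋃ j ∈ Finset.Icc 1 k, {ω | rnk (V ω) (Fin.last n) = j}) := by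
          apply measure_mono
          intro ω hω
          simp only [Set.mem_setOf_eq] at hω
          simp only [Set.mem_iUnion, Set.mem_setOf_eq]
          exact ⟨rnk (V ω) (Fin.last n), by simp [Finset.mem_Icc, rnk_pos (V ω), hω], rfl⟩
      _ ≤ ∑ j ∈ Finset.Icc 1 k, μ {ω | rnk (V ω) (Fin.last n) = j} :=
          measure_biUnion_finset_le _ _
      _ ≤ ∑ j ∈ Finset.Icc 1 k, ((n : ℝ≥0∞) + 1)⁻¹ :=
          Finset.sum_le_sum fun j _ => hbound j
  have hcard : (Finset.Icc 1 k).card = k := by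
    rw [Nat.card_Icc]; omega
  have hfinal : (k : ℝ≥0∞) * ((n : ℝ≥0∞) + 1)⁻¹ ≤ ENNReal.ofReal (1 - α + 1 / (n + 1)) := by
    have heq : (k : ℝ≥0∞) * ((n : ℝ≥0∞) + 1)⁻¹ = ENNReal.ofReal ((k : ℝ) / ((n:ℝ) + 1)) := by
      rw [ENNReal.ofReal_div_of_pos (by positivity), div_eq_mul_inv]
      congr 1
      · exact (ENNReal.ofReal_natCast k).symm
      · congr 1
        rw [ENNReal.ofReal_add (by positivity) (by norm_num)]
        simp [ENNReal.ofReal_natCast]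
    rw [heq]
    apply ENNReal.ofReal_le_ofReal
    have hceil : (k : ℝ) < (n + 1 : ℝ) * (1 - α) + 1 := Nat.ceil_lt_add_one (le_of_lt hpos)
    rw [div_le_iff₀ (by positivity)]
    have h1 : (1/((n:ℝ)+1)) * ((n:ℝ)+1) = 1 := by field_simp
    nlinarith [hceil]
  calc μ {ω | Z (Fin.last n) ω ≤
      kthSmallest (List.ofFn fun i : Fin n => Z i.castSucc ω) k}
      ≤ ∑ j ∈ Finset.Icc 1 k, ((n : ℝ≥0∞) + 1)⁻¹ := hmeasE
    _ = (k : ℝ≥0∞) * ((n : ℝ≥0∞) + 1)⁻¹ := by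
        rw [Finset.sum_const, hcard, nsmul_eq_mul]
    _ ≤ ENNReal.ofReal (1 - α + 1 / (n + 1)) := hfinal
end
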